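/- For any word w in the positive monoid generated by σ_1 and σ_2, t^2 + t + 1 divides det(B_t(w) - I) in ℤ[t]. -/
import Mathlib


open Polynomial

/-- The positive generators σ₁, σ₂ of the braid group `B₃`. -/
inductive BGen
  | s1 | s2
deriving DecidableEq

/-- The reduced Burau representation over `ℤ[t]`, on the positive generators. -/
noncomputable def burauGen : BGen → Matrix (Fin 2) (Fin 2) (Polynomial ℤ)
  | .s1 => !![-X, 1; 0, 1]
  | .s2 => !![1, 0; X, -X]

/-- The Burau matrix of a positive word. -/
noncomputable def burauPos (w : List BGen) : Matrix (Fin 2) (Fin 2) (Polynomial ℤ) :=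
  (w.map burauGen).prod

lemma burauPos_nil : burauPos [] = 1 := rfl

lemma burauPos_cons (g : BGen) (w : List BGen) :
    burauPos (g :: w) = burauGen g * burauPos w := by
  simp [burauPos]

/-- Mod `X²+X+1`, every positive Burau matrix fixes the vector `(1, 1+X)`. -/
lemma burau_fixes (w : List BGen) :
    ((X ^ 2 + X + 1 : Polynomial ℤ) ∣
      (burauPos w 0 0 + burauPos w 0 1 * (1 + X) - 1)) ∧
    ((X ^ 2 + X + 1 : Polynomial ℤ) ∣
      (burauPos w 1 0 + burauPos w 1 1 * (1 + X) - (1 + X))) := by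
  induction w with
  | nil =>
      constructor <;> simp [burauPos_nil, Matrix.one_apply]
  | cons g w ih =>
      obtain ⟨⟨a, ha⟩, ⟨b, hb⟩⟩ := ih
      cases g with
      | s1 =>
          constructor
          · refine ⟨-X * a + b, ?_⟩
            simp [burauPos_cons, burauGen, Matrix.mul_apply, Fin.sum_univ_two]
            linear_combination (-X : Polynomial ℤ) * ha + hb
          · refine ⟨b, ?_⟩
            simp [burauPos_cons, burauGen, Matrix.mul_apply, Fin.sum_univ_two]
            linear_combination hb
      | s2 =>
          constructor
          · refine ⟨a, ?_⟩
            simp [burauPos_cons, burauGen, Matrix.mul_apply, Fin.sum_univ_two]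
            linear_combination ha
          · refine ⟨X * a - X * b - 1, ?_⟩
            simp [burauPos_cons, burauGen, Matrix.mul_apply, Fin.sum_univ_two]
            linear_combination (X : Polynomial ℤ) * ha - X * hb

/-- For any positive word `w` in σ₁, σ₂,
`t² + t + 1` divides `det (B_t(w) - I)` in `ℤ[t]`. -/
theorem cyclotomic_dvd_burau_det (w : List BGen) :
    (X ^ 2 + X + 1 : Polynomial ℤ) ∣ (burauPos w - 1).det := by
  obtain ⟨⟨a, ha⟩, ⟨b, hb⟩⟩ := burau_fixes w
  refine ⟨(burauPos w 1 1 - 1) * a - burauPos w 0 1 * b, ?_⟩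
  rw [Matrix.det_fin_two]
  simp only [Matrix.sub_apply, Matrix.one_apply_eq, Matrix.one_apply_ne (by decide : (0:Fin 2) ≠ 1),
    Matrix.one_apply_ne (by decide : (1:Fin 2) ≠ 0)]
  linear_combination (burauPos w 1 1 - 1) * ha - burauPos w 0 1 * hb
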